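/- Let r ≥ 2 and let G be a K_{r+1}-free graph on n vertices. For integers i, j with 1 ≤ i ≤ j ≤ r, we have (k_j(G)/C(r,j))^{1/j} ≤ (k_i(G)/C(r,i))^{1/i}, where k_m(G) denotes the number of copies of K_m in G. -/

import Mathlib

open SimpleGraph Matrix
open scoped Classical

/-- `G` contains no copy of `F`, i.e. no subgraph of `G` is isomorphic to `F`:
there is no injective graph homomorphism from `F` into `G`. -/
def IsFFree {α β : Type*} (F : SimpleGraph α) (G : SimpleGraph β) : Prop :=
  ¬ ∃ f : F →g G, Function.Injective f

/-- The real adjacency matrix of a graph on `Fin n`. -/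
noncomputable def adjMat {n : ℕ} (G : SimpleGraph (Fin n)) : Matrix (Fin n) (Fin n) ℝ :=
  Matrix.of fun i j => if G.Adj i j then 1 else 0

/-- The spectral radius of a graph: the largest real eigenvalue of its adjacency matrix. -/
noncomputable def specRad {n : ℕ} (G : SimpleGraph (Fin n)) : ℝ :=
  sSup {μ : ℝ | ∃ x : Fin n → ℝ, x ≠ 0 ∧ adjMat G *ᵥ x = μ • x}

/-- The edit distance between two graphs on the same `n`-element vertex set. -/
noncomputable def editDist {n : ℕ} (G H : SimpleGraph (Fin n)) : ℕ :=
  sInf {k : ℕ | ∃ H' : SimpleGraph (Fin n), Nonempty (H' ≃g H) ∧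
    (symmDiff G.edgeSet H'.edgeSet).ncard = k}

/-- `cliqueCount G s` is the number of copies of `K_s` in `G`. -/
noncomputable def cliqueCount {n : ℕ} (G : SimpleGraph (Fin n)) (s : ℕ) : ℕ :=
  {S : Finset (Fin n) | G.IsNClique s S}.ncard

/-- A graph is color-critical if deleting some edge decreases the chromatic number. -/
def ColorCritical {α : Type*} (F : SimpleGraph α) : Prop :=
  ∃ e ∈ F.edgeSet, (F.deleteEdges {e}).chromaticNumber < F.chromaticNumber

/-- The `p`-spectral radius of a graph on `Fin n`. -/
noncomputable def pSpecRad {n : ℕ} (p : ℝ) (G : SimpleGraph (Fin n)) : ℝ :=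
  sSup {t : ℝ | ∃ x : Fin n → ℝ, (∑ i, |x i| ^ p) = 1 ∧
    t = ∑ i, ∑ j, if G.Adj i j then x i * x j else 0}

/-- The minimum degree of a graph on `Fin n`. -/
noncomputable def minDeg {n : ℕ} (G : SimpleGraph (Fin n)) : ℕ :=
  sInf (Set.range fun v => {u | G.Adj v u}.ncard)

/-- The clique number of a graph. -/
noncomputable def cliqueNum {n : ℕ} (G : SimpleGraph (Fin n)) : ℕ :=
  sSup {k : ℕ | ∃ S : Finset (Fin n), G.IsNClique k S}

/-- `G` is `K_{r+1}`-saturated: it is `K_{r+1}`-free but adding any missing edge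
creates a copy of `K_{r+1}`. -/
def KSaturated (r : ℕ) {V : Type*} (G : SimpleGraph V) : Prop :=
  G.CliqueFree (r + 1) ∧
    ∀ v w : V, v ≠ w → ¬ G.Adj v w →
      ¬ (G ⊔ SimpleGraph.fromEdgeSet {s(v, w)}).CliqueFree (r + 1)

-- main auxiliary development
namespace FR
open Polynomial

/-- esymm of a multiset of nonnegative reals is nonnegative. -/
lemma esymm_nonneg {s : Multiset ℝ} (h : ∀ a ∈ s, 0 ≤ a) (k : ℕ) : 0 ≤ s.esymm k := by
  unfold Multiset.esymm
  apply Multiset.sum_nonneg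
  intro x hx
  simp only [Multiset.mem_map] at hx
  obtain ⟨t, ht, rfl⟩ := hx
  rw [Multiset.mem_powersetCard] at ht
  exact Multiset.prod_nonneg fun a ha => h a (Multiset.mem_of_le ht.1 ha)

lemma esymm_cons_zero (s : Multiset ℝ) (k : ℕ) : (0 ::ₘ s).esymm k = s.esymm k := by
  cases k with
  | zero => simp [Multiset.esymm]
  | succ k =>
    unfold Multiset.esymm
    rw [Multiset.powersetCard_cons, Multiset.map_add, Multiset.sum_add, Multiset.map_map]
    have : ∀ x ∈ (Multiset.powersetCard k s).map (Multiset.prod ∘ Multiset.cons 0),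
        x = (0:ℝ) := by
      intro x hx
      simp only [Multiset.mem_map, Function.comp_apply] at hx
      obtain ⟨t, _, rfl⟩ := hx
      simp
    rw [Multiset.sum_eq_zero this, add_zero]

lemma esymm_pad_zero (s : Multiset ℝ) (q : ℕ) (k : ℕ) :
    (s + Multiset.replicate q 0).esymm k = s.esymm k := by
  induction q with
  | zero => simp
  | succ q ih =>
    have : s + Multiset.replicate (q+1) 0 = 0 ::ₘ (s + Multiset.replicate q 0) := by
      rw [Multiset.replicate_succ, add_comm s, Multiset.cons_add, add_comm]
    rw [this, esymm_cons_zero, ih]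

lemma powersetCard_card_self (s : Multiset ℝ) :
    s.powersetCard (Multiset.card s) = {s} := by
  have hcard : Multiset.card (s.powersetCard (Multiset.card s)) = 1 := by
    rw [Multiset.card_powersetCard, Nat.choose_self]
  obtain ⟨t, ht⟩ := Multiset.card_eq_one.mp hcard
  have : t = s := by
    have : t ∈ s.powersetCard (Multiset.card s) := by rw [ht]; simp
    rw [Multiset.mem_powersetCard] at this
    exact Multiset.eq_of_le_of_card_le this.1 (le_of_eq this.2.symm)
  rw [ht, this]

lemma esymm_card_eq_prod (s : Multiset ℝ) : s.esymm (Multiset.card s) = s.prod := by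
  unfold Multiset.esymm
  rw [powersetCard_card_self]
  simp

/-- product over all (card-1)-element sub-multisets of the products equals prod^(card-1) -/
lemma prod_powersetCard_pred (s : Multiset ℝ) :
    ((s.powersetCard (Multiset.card s - 1)).map Multiset.prod).prod
      = s.prod ^ (Multiset.card s - 1) := by
  induction s using Multiset.induction with
  | empty => simp
  | cons a s ih =>
    rcases Nat.eq_zero_or_pos (Multiset.card s) with h0 | hpos
    · rw [Multiset.card_eq_zero] at h0
      subst h0
      simp
    · have hc : Multiset.card (a ::ₘ s) - 1 = (Multiset.card s - 1) + 1 := by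
        rw [Multiset.card_cons]
        omega
      rw [hc, Multiset.powersetCard_cons, Multiset.map_add, Multiset.prod_add,
        Multiset.map_map]
      have h1 : Multiset.card s - 1 + 1 = Multiset.card s := by omega
      rw [h1, powersetCard_card_self]
      have h2 : ((s.powersetCard (Multiset.card s - 1)).map
          (Multiset.prod ∘ Multiset.cons a)).prod
          = a ^ (Multiset.card s) * s.prod ^ (Multiset.card s - 1) := by
        have : (s.powersetCard (Multiset.card s - 1)).map (Multiset.prod ∘ Multiset.cons a)
            = (s.powersetCard (Multiset.card s - 1)).map (fun t => a * t.prod) := by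
          apply Multiset.map_congr rfl
          intro t _
          simp [Multiset.prod_cons]
        rw [this]
        rw [show (fun (t : Multiset ℝ) => a * t.prod)
            = (fun x => a * x) ∘ Multiset.prod by rfl, ← Multiset.map_map,
          Multiset.prod_map_mul]
        simp only [Multiset.map_const', Multiset.prod_replicate, Multiset.map_id',
          Multiset.card_map, Multiset.card_powersetCard]
        rw [ih]
        congr 2
        rw [Nat.choose_symm (show 1 ≤ Multiset.card s from hpos), Nat.choose_one_right]
      rw [h2, Multiset.map_singleton, Multiset.prod_singleton, Multiset.prod_cons, mul_pow]
      have h4 : s.prod ^ Multiset.card s = s.prod * s.prod ^ (Multiset.card s - 1) := by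
        conv_lhs => rw [show Multiset.card s = (Multiset.card s - 1) + 1 by omega]
        rw [pow_succ]
        ring
      rw [h4]
      ring
/-- AM-GM for a multiset of nonnegative reals. -/
lemma multiset_amgm (T : Multiset ℝ) (h : ∀ t ∈ T, 0 ≤ t) :
    (Multiset.card T : ℝ) ^ (Multiset.card T) * T.prod ≤ T.sum ^ (Multiset.card T) := by
  rcases Nat.eq_zero_or_pos (Multiset.card T) with h0 | hpos
  · rw [Multiset.card_eq_zero] at h0
    subst h0
    simp
  set N := Multiset.card T with hN
  have hlen : T.toList.length = N := by simp [hN]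
  set z : Fin N → ℝ := fun i => T.toList.get (Fin.cast hlen.symm i) with hz
  have h1 : ∏ i : Fin T.toList.length, T.toList.get i = T.toList.prod := by
    rw [← List.prod_ofFn, List.ofFn_get]
  have h1s : ∑ i : Fin T.toList.length, T.toList.get i = T.toList.sum := by
    rw [← List.sum_ofFn, List.ofFn_get]
  have hprod : T.prod = ∏ i, z i := by
    rw [← Multiset.prod_toList, ← h1]
    exact Fin.prod_congr' z hlen
  have hsum : T.sum = ∑ i, z i := by
    rw [← Multiset.sum_toList, ← h1s]
    exact Fin.sum_congr' z hlen
  have hznn : ∀ i : Fin N, 0 ≤ z i := by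
    intro i
    apply h
    rw [← Multiset.coe_toList T]
    exact List.get_mem _ _
  have key := Real.geom_mean_le_arith_mean_weighted Finset.univ
      (fun _ => (N : ℝ)⁻¹) z (fun i _ => by positivity)
      (by
        rw [Finset.sum_const, Finset.card_univ, Fintype.card_fin, nsmul_eq_mul]
        field_simp)
      (fun i _ => hznn i)
  have hP : ∏ i, z i ^ ((N:ℝ)⁻¹) = (∏ i, z i) ^ ((N:ℝ)⁻¹) := by
    rw [← Real.finset_prod_rpow _ _ (fun i _ => hznn i)]
  rw [hP] at key
  have hprodnn : (0:ℝ) ≤ ∏ i, z i := Finset.prod_nonneg fun i _ => hznn i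
  have key2 : ((∏ i, z i) ^ ((N:ℝ)⁻¹)) ^ N ≤ (∑ i, (N:ℝ)⁻¹ * z i) ^ N :=
    pow_le_pow_left₀ (Real.rpow_nonneg hprodnn _) key N
  rw [Real.rpow_inv_natCast_pow hprodnn hpos.ne'] at key2
  have hsum2 : ∑ i, (N:ℝ)⁻¹ * z i = (N:ℝ)⁻¹ * ∑ i, z i := by
    rw [Finset.mul_sum]
  rw [hsum2, mul_pow] at key2
  rw [hprod, hsum]
  calc (N:ℝ) ^ N * ∏ i, z i ≤ (N:ℝ)^N * (((N:ℝ)⁻¹)^N * (∑ i, z i)^N) := by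
        apply mul_le_mul_of_nonneg_left key2 (by positivity)
    _ = (∑ i, z i)^N := by
        rw [← mul_assoc, ← mul_pow, mul_inv_cancel₀ (by positivity : (N:ℝ) ≠ 0), one_pow, one_mul]

/-- transitivity of the "good pair" relation -/
lemma good_trans {eu ev ew cu cv cw : ℝ} {u v w : ℕ} (hu : 1 ≤ u) (hv : 1 ≤ v) (hw : 1 ≤ w)
    (heu : 0 ≤ eu) (hev0 : 0 ≤ ev) (hew : 0 ≤ ew)
    (hcu : 0 < cu) (hcv : 0 < cv) (hcw : 0 < cw)
    (h1 : ev ^ u * cu ^ v ≤ eu ^ v * cv ^ u)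
    (h2 : ew ^ v * cv ^ w ≤ ev ^ w * cw ^ v) :
    ew ^ u * cu ^ w ≤ eu ^ w * cw ^ u := by
  rcases eq_or_lt_of_le hev0 with hev | hev
  · -- ev = 0 : then h2 forces ew = 0
    have h2' : ew ^ v * cv ^ w ≤ 0 := by
      rw [← hev] at h2
      simpa [zero_pow (by omega : w ≠ 0)] using h2
    have hewv : ew ^ v ≤ 0 := by
      by_contra hc
      push_neg at hc
      nlinarith [pow_pos hcv w]
    have hew0 : ew = 0 := by
      have : ew ^ v = 0 := le_antisymm hewv (pow_nonneg hew v)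
      exact pow_eq_zero_iff (by omega : v ≠ 0) |>.mp this
    rw [hew0, zero_pow (by omega : u ≠ 0), zero_mul]
    positivity
  · -- main case : ev > 0
    have H1 : (ev ^ u * cu ^ v) ^ w ≤ (eu ^ v * cv ^ u) ^ w :=
      pow_le_pow_left₀ (by positivity) h1 w
    have H2 : (ew ^ v * cv ^ w) ^ u ≤ (ev ^ w * cw ^ v) ^ u :=
      pow_le_pow_left₀ (by positivity) h2 u
    have H := mul_le_mul H2 H1 (by positivity) (by positivity)
    -- H : (ew^v cv^w)^u * (ev^u cu^v)^w ≤ (ev^w cw^v)^u * (eu^v cv^u)^w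
    have Hl : (ew ^ v * cv ^ w) ^ u * (ev ^ u * cu ^ v) ^ w
        = (ew ^ u * cu ^ w) ^ v * (ev ^ (u*w) * cv ^ (u*w)) := by ring
    have Hr : (ev ^ w * cw ^ v) ^ u * (eu ^ v * cv ^ u) ^ w
        = (eu ^ w * cw ^ u) ^ v * (ev ^ (u*w) * cv ^ (u*w)) := by ring
    rw [Hl, Hr] at H
    have hpos : 0 < ev ^ (u*w) * cv ^ (u*w) := by positivity
    have H' : (ew ^ u * cu ^ w) ^ v ≤ (eu ^ w * cw ^ u) ^ v :=
      le_of_mul_le_mul_right H hpos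
    exact le_of_pow_le_pow_left₀ (by omega : v ≠ 0) (by positivity) H'

lemma top_case (n : ℕ) (hn : 1 ≤ n) (s : Multiset ℝ) (hcard : Multiset.card s = n)
    (hnn : ∀ a ∈ s, 0 ≤ a) :
    s.esymm n ^ (n-1) * ((n.choose (n-1) : ℕ) : ℝ) ^ n
      ≤ s.esymm (n-1) ^ n * ((n.choose n : ℕ) : ℝ) ^ (n-1) := by
  have hcs : n.choose (n-1) = n := by
    rw [Nat.choose_symm hn, Nat.choose_one_right]
  rw [Nat.choose_self, hcs]
  set T : Multiset ℝ := (s.powersetCard (n-1)).map Multiset.prod with hT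
  have hTnn : ∀ t ∈ T, 0 ≤ t := by
    intro t ht
    rw [hT, Multiset.mem_map] at ht
    obtain ⟨u, hu, rfl⟩ := ht
    rw [Multiset.mem_powersetCard] at hu
    exact Multiset.prod_nonneg fun a ha => hnn a (Multiset.mem_of_le hu.1 ha)
  have hTcard : Multiset.card T = n := by
    rw [hT, Multiset.card_map, Multiset.card_powersetCard, hcard,
      Nat.choose_symm hn, Nat.choose_one_right]
  have hTsum : T.sum = s.esymm (n-1) := rfl
  have hTprod : T.prod = s.esymm n ^ (n-1) := by
    rw [hT, ← hcard, prod_powersetCard_pred, ← esymm_card_eq_prod, hcard]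
  have := multiset_amgm T hTnn
  rw [hTcard, hTsum, hTprod] at this
  calc s.esymm n ^ (n-1) * (n:ℝ) ^ n = (n:ℝ)^n * s.esymm n ^ (n-1) := by ring
    _ ≤ s.esymm (n-1) ^ n := this
    _ = s.esymm (n-1) ^ n * ((1:ℕ):ℝ) ^ (n-1) := by simp

lemma step_derivative (n : ℕ) (hn : 2 ≤ n)
    (IH : ∀ s : Multiset ℝ, Multiset.card s = n - 1 → (∀ a ∈ s, 0 ≤ a) →
      ∀ i j : ℕ, 1 ≤ i → i ≤ j → j ≤ n - 1 →
      s.esymm j ^ i * (((n-1).choose i : ℕ) : ℝ) ^ j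
        ≤ s.esymm i ^ j * (((n-1).choose j : ℕ) : ℝ) ^ i)
    (s : Multiset ℝ) (hcard : Multiset.card s = n) (hnn : ∀ a ∈ s, 0 ≤ a)
    (i j : ℕ) (hi : 1 ≤ i) (hij : i ≤ j) (hj : j ≤ n - 1) :
    s.esymm j ^ i * ((n.choose i : ℕ) : ℝ) ^ j
      ≤ s.esymm i ^ j * ((n.choose j : ℕ) : ℝ) ^ i := by
  classical
  set f : ℝ[X] := (s.map (fun a => X + C a)).prod with hf
  have hmon : ∀ a ∈ s, (X + C a).Monic := fun a _ => monic_X_add_C a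
  have hfm : f.Monic := monic_multiset_prod_of_monic _ _ hmon
  have hfd : f.natDegree = n := by
    have hmon' : ∀ p ∈ s.map (fun a => X + C a), p.Monic := by
      intro p hp
      rw [Multiset.mem_map] at hp
      obtain ⟨a, _, rfl⟩ := hp
      exact monic_X_add_C a
    rw [hf, natDegree_multiset_prod_of_monic _ hmon', Multiset.map_map]
    have : (s.map (Polynomial.natDegree ∘ fun a => X + C a)) = s.map (fun _ => 1) := by
      apply Multiset.map_congr rfl
      intro a _
      simp [natDegree_X_add_C]
    rw [this, Multiset.map_const', Multiset.sum_replicate, hcard, smul_eq_mul, mul_one]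
  have hcoeff_f : ∀ m : ℕ, m ≤ n → f.coeff m = s.esymm (n - m) := by
    intro m hm
    rw [hf, Multiset.prod_X_add_C_coeff s (by rw [hcard]; exact hm), hcard]
  have hcoeff_f_nn : ∀ m : ℕ, 0 ≤ f.coeff m := by
    intro m
    rcases le_or_gt m n with hm | hm
    · rw [hcoeff_f m hm]
      exact esymm_nonneg hnn _
    · rw [coeff_eq_zero_of_natDegree_lt (by omega : f.natDegree < m)]
  have hroots : f.roots = s.map (fun a => -a) := by
    have h1 : f = ((s.map (fun a => -a)).map (fun a => X - C a)).prod := by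
      rw [hf, Multiset.map_map]
      congr 1
      apply Multiset.map_congr rfl
      intro a _
      simp [sub_neg_eq_add]
    rw [h1, roots_multiset_prod_X_sub_C]
  have hfcard : Multiset.card f.roots = n := by rw [hroots, Multiset.card_map, hcard]
  set g := derivative f with hg
  have hgle : g.natDegree < n := by
    rw [← hfd]
    exact natDegree_derivative_lt (by omega)
  have hge : n ≤ Multiset.card g.roots + 1 := by
    rw [← hfcard]
    exact f.card_roots_le_derivative
  have hgroots_le : Multiset.card g.roots ≤ g.natDegree := g.card_roots'
  have hgcard : Multiset.card g.roots = n - 1 := by omega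
  have hgdeg : g.natDegree = n - 1 := by omega
  have hsplit : g.Splits := splits_iff_card_roots.mpr (by rw [hgcard, hgdeg])
  have hcoeff_g : ∀ k : ℕ, g.coeff k = f.coeff (k+1) * ((k : ℝ) + 1) := fun k =>
    coeff_derivative f k
  have hgtop : g.coeff (n-1) = (n : ℝ) := by
    rw [hcoeff_g, show n - 1 + 1 = n by omega]
    rw [show f.coeff n = 1 by rw [← hfd]; exact hfm.coeff_natDegree]
    have : ((n - 1 : ℕ) : ℝ) + 1 = (n : ℝ) := by
      rw [← Nat.cast_succ]
      congr 1
      omega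
    rw [this, one_mul]
  have hlc : g.leadingCoeff = (n : ℝ) := by
    rw [Polynomial.leadingCoeff, hgdeg, hgtop]
  have hrootsle : ∀ ρ ∈ g.roots, ρ ≤ 0 := by
    intro ρ hρ
    by_contra hc
    push_neg at hc
    have h0 : g.eval ρ = 0 := (isRoot_of_mem_roots hρ).eq_zero
    have hpos : 0 < g.eval ρ := by
      rw [eval_eq_sum_range]
      apply Finset.sum_pos'
      · intro k _
        refine mul_nonneg ?_ (pow_nonneg hc.le k)
        rw [hcoeff_g]
        exact mul_nonneg (hcoeff_f_nn _) (by positivity)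
      · refine ⟨n - 1, ?_, ?_⟩
        · rw [Finset.mem_range, hgdeg]
          omega
        · rw [hgtop]
          positivity
    linarith
  set Y : Multiset ℝ := g.roots.map (fun a => -a) with hY
  have hYcard : Multiset.card Y = n - 1 := by rw [hY, Multiset.card_map, hgcard]
  have hYnn : ∀ y ∈ Y, 0 ≤ y := by
    intro y hy
    rw [hY, Multiset.mem_map] at hy
    obtain ⟨ρ, hρ, rfl⟩ := hy
    linarith [hrootsle ρ hρ]
  have hfac : g = C (n : ℝ) * (Y.map (fun y => X + C y)).prod := by
    have h1 : (Y.map (fun y => X + C y)) = g.roots.map (fun a => X - C a) := by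
      rw [hY, Multiset.map_map]
      apply Multiset.map_congr rfl
      intro a _
      simp [sub_eq_add_neg]
    rw [h1, ← hlc]
    exact hsplit.eq_prod_roots
  have hrel : ∀ w : ℕ, w ≤ n - 1 →
      (n : ℝ) * Y.esymm w = ((n - w : ℕ) : ℝ) * s.esymm w := by
    intro w hw
    have e1 : g.coeff (n-1-w) = s.esymm w * ((n - w : ℕ) : ℝ) := by
      rw [hcoeff_g, show n - 1 - w + 1 = n - w by omega,
        hcoeff_f (n - w) (by omega), show n - (n - w) = w by omega]
      congr 1
      rw [← Nat.cast_succ]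
      congr 1
      omega
    have e2 : g.coeff (n-1-w) = (n : ℝ) * Y.esymm w := by
      rw [hfac, coeff_C_mul,
        Multiset.prod_X_add_C_coeff Y (by rw [hYcard]; omega : n - 1 - w ≤ Multiset.card Y),
        hYcard, show n - 1 - (n - 1 - w) = w by omega]
    rw [← e2, e1, mul_comm]
  -- now the final algebra
  have hYi := hrel i (by omega)
  have hYj := hrel j (by omega)
  have hbin : ∀ u : ℕ, u ≤ n - 1 →
      ((n - u : ℕ) : ℝ) * ((n.choose u : ℕ) : ℝ) = (n : ℝ) * (((n-1).choose u : ℕ) : ℝ) := by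
    intro u hu
    have : (n - u) * n.choose u = n * (n-1).choose u := by
      have h1 : n * (n-1).choose u = (n-1).choose u * n := by ring
      have h2 : n.choose (u+1) * (u+1) = n.choose u * (n - u) := Nat.choose_succ_right_eq n u
      have h3 : Nat.succ (n-1) * (n-1).choose u = (n-1+1).choose (u+1) * (u+1) :=
        Nat.add_one_mul_choose_eq (n-1) u
      rw [show Nat.succ (n-1) = n by omega, show n - 1 + 1 = n by omega] at h3
      calc (n - u) * n.choose u = n.choose u * (n - u) := by ring
        _ = n.choose (u+1) * (u+1) := h2.symm
        _ = n * (n-1).choose u := h3.symm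
    exact_mod_cast congrArg (fun m : ℕ => (m : ℝ)) this
  have IHY := IH Y hYcard hYnn i j hi hij hj
  -- multiply IH by n^(i+j)
  have H : ((n:ℝ) * Y.esymm j) ^ i * ((n:ℝ) * (((n-1).choose i : ℕ):ℝ)) ^ j
      ≤ ((n:ℝ) * Y.esymm i) ^ j * ((n:ℝ) * (((n-1).choose j : ℕ):ℝ)) ^ i := by
    have hn0 : (0:ℝ) ≤ (n:ℝ) := by positivity
    calc ((n:ℝ) * Y.esymm j) ^ i * ((n:ℝ) * (((n-1).choose i : ℕ):ℝ)) ^ j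
        = (n:ℝ)^i * (n:ℝ)^j * (Y.esymm j ^ i * (((n-1).choose i : ℕ):ℝ) ^ j) := by ring
      _ ≤ (n:ℝ)^i * (n:ℝ)^j * (Y.esymm i ^ j * (((n-1).choose j : ℕ):ℝ) ^ i) := by
          apply mul_le_mul_of_nonneg_left IHY (by positivity)
      _ = ((n:ℝ) * Y.esymm i) ^ j * ((n:ℝ) * (((n-1).choose j : ℕ):ℝ)) ^ i := by ring
  rw [hYi, hYj] at H
  rw [← hbin i (by omega), ← hbin j (by omega)] at H
  -- H : (b * ej)^i * (a * Ci)^j ≤ (a * ei)^j * (b * Cj)^i with a = n-i, b = n-j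
  have ha : (0:ℝ) < ((n - i : ℕ) : ℝ) := by
    have : 0 < n - i := by omega
    exact_mod_cast this
  have hb : (0:ℝ) < ((n - j : ℕ) : ℝ) := by
    have : 0 < n - j := by omega
    exact_mod_cast this
  set a := ((n - i : ℕ) : ℝ)
  set b := ((n - j : ℕ) : ℝ)
  set ej := s.esymm j
  set ei := s.esymm i
  set Ci := ((n.choose i : ℕ) : ℝ)
  set Cj := ((n.choose j : ℕ) : ℝ)
  have H2 : (b^i * a^j) * (ej ^ i * Ci ^ j) ≤ (b^i * a^j) * (ei ^ j * Cj ^ i) := by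
    calc (b^i * a^j) * (ej ^ i * Ci ^ j) = (b * ej)^i * (a * Ci)^j := by ring
      _ ≤ (a * ei)^j * (b * Cj)^i := H
      _ = (b^i * a^j) * (ei ^ j * Cj ^ i) := by ring
  exact le_of_mul_le_mul_left H2 (by positivity)

/-- Maclaurin's inequality for multisets of nonnegative reals. -/
theorem maclaurin : ∀ n : ℕ, ∀ s : Multiset ℝ, Multiset.card s = n → (∀ a ∈ s, 0 ≤ a) →
    ∀ i j : ℕ, 1 ≤ i → i ≤ j → j ≤ n →
    s.esymm j ^ i * ((n.choose i : ℕ) : ℝ) ^ j ≤ s.esymm i ^ j * ((n.choose j : ℕ) : ℝ) ^ i := by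
  intro n
  induction n using Nat.strong_induction_on with
  | _ n IHn =>
  intro s hcard hnn i j hi hij hj
  rcases eq_or_lt_of_le hij with rfl | hlt
  · exact le_of_eq rfl
  -- i < j, so 2 ≤ j ≤ n, hence 2 ≤ n
  have hn2 : 2 ≤ n := by omega
  have IH := IHn (n-1) (by omega)
  have IH' : ∀ s : Multiset ℝ, Multiset.card s = n - 1 → (∀ a ∈ s, 0 ≤ a) →
      ∀ i j : ℕ, 1 ≤ i → i ≤ j → j ≤ n - 1 →
      s.esymm j ^ i * (((n-1).choose i : ℕ) : ℝ) ^ j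
        ≤ s.esymm i ^ j * (((n-1).choose j : ℕ) : ℝ) ^ i := IH
  by_cases hjn : j = n
  · subst hjn
    have hchoosepos : ∀ u : ℕ, u ≤ j → (0:ℝ) < ((j.choose u : ℕ) : ℝ) := by
      intro u hu
      exact_mod_cast Nat.choose_pos hu
    have T2 := top_case j (by omega) s hcard hnn
    have T1 : s.esymm (j-1) ^ i * ((j.choose i : ℕ) : ℝ) ^ (j-1)
        ≤ s.esymm i ^ (j-1) * ((j.choose (j-1) : ℕ) : ℝ) ^ i := by
      rcases eq_or_lt_of_le (show i ≤ j - 1 by omega) with rfl | hilt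
      · exact le_of_eq rfl
      · exact step_derivative j hn2 IH' s hcard hnn i (j-1) hi (by omega) (by omega)
    exact good_trans hi (by omega) (by omega) (esymm_nonneg hnn i)
      (esymm_nonneg hnn (j-1)) (esymm_nonneg hnn j)
      (hchoosepos i (by omega)) (hchoosepos (j-1) (by omega)) (hchoosepos j le_rfl) T1 T2
  · exact step_derivative n hn2 IH' s hcard hnn i j hi hij (by omega)

section Graph

open Finset SimpleGraph
open scoped Classical

variable {n : ℕ} (G : SimpleGraph (Fin n))

/-- the finset of s-cliques -/
noncomputable def CL (s : ℕ) : Finset (Finset (Fin n)) :=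
  Finset.univ.filter (fun S => G.IsNClique s S)

/-- weighted clique polynomial -/
noncomputable def Pw (s : ℕ) (x : Fin n → ℝ) : ℝ :=
  ∑ S ∈ CL G s, ∏ v ∈ S, x v

lemma Pw_nonneg (s : ℕ) {x : Fin n → ℝ} (hx : ∀ v, 0 ≤ x v) : 0 ≤ Pw G s x :=
  Finset.sum_nonneg fun S _ => Finset.prod_nonneg fun v _ => hx v

/-- coefficient of neither u nor v -/
noncomputable def Aco (u v : Fin n) (s : ℕ) (x : Fin n → ℝ) : ℝ :=
  ∑ S ∈ (CL G s).filter (fun S => u ∉ S ∧ v ∉ S), ∏ w ∈ S, x w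

/-- coefficient of u -/
noncomputable def Bco (u : Fin n) (s : ℕ) (x : Fin n → ℝ) : ℝ :=
  ∑ S ∈ (CL G s).filter (fun S => u ∈ S), ∏ w ∈ S.erase u, x w

/-- coefficient of v -/
noncomputable def Cco (v : Fin n) (s : ℕ) (x : Fin n → ℝ) : ℝ :=
  ∑ S ∈ (CL G s).filter (fun S => v ∈ S), ∏ w ∈ S.erase v, x w

variable {u v : Fin n}

lemma not_both (huv : u ≠ v) (hnadj : ¬ G.Adj u v) {s : ℕ} {S : Finset (Fin n)} (hS : S ∈ CL G s) (hu : u ∈ S) (hv : v ∈ S) :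
    False := by
  have hcl : G.IsNClique s S := (Finset.mem_filter.mp hS).2
  exact hnadj (hcl.1 hu hv huv)

lemma decomp (huv : u ≠ v) (hnadj : ¬ G.Adj u v) (s : ℕ) (x : Fin n → ℝ) :
    Pw G s x = Aco G u v s x + x u * Bco G u s x + x v * Cco G v s x := by
  rw [Pw, ← Finset.sum_filter_add_sum_filter_not (CL G s) (fun S => u ∈ S)]
  rw [← Finset.sum_filter_add_sum_filter_not ((CL G s).filter (fun S => u ∉ S))
    (fun S => v ∈ S)]
  have h1 : ∑ S ∈ (CL G s).filter (fun S => u ∈ S), ∏ w ∈ S, x w = x u * Bco G u s x := by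
    rw [Bco, Finset.mul_sum]
    apply Finset.sum_congr rfl
    intro S hS
    rw [Finset.mem_filter] at hS
    exact (Finset.mul_prod_erase S x hS.2).symm
  have h2 : ((CL G s).filter (fun S => u ∉ S)).filter (fun S => v ∈ S)
      = (CL G s).filter (fun S => v ∈ S) := by
    rw [Finset.filter_filter]
    apply Finset.filter_congr
    intro S hS
    constructor
    · exact fun h => h.2
    · intro h
      exact ⟨fun hu => not_both G huv hnadj hS hu h, h⟩
  have h3 : ∑ S ∈ (CL G s).filter (fun S => v ∈ S), ∏ w ∈ S, x w = x v * Cco G v s x := by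
    rw [Cco, Finset.mul_sum]
    apply Finset.sum_congr rfl
    intro S hS
    rw [Finset.mem_filter] at hS
    exact (Finset.mul_prod_erase S x hS.2).symm
  have h4 : ((CL G s).filter (fun S => u ∉ S)).filter (fun S => ¬ v ∈ S)
      = (CL G s).filter (fun S => u ∉ S ∧ v ∉ S) := by
    rw [Finset.filter_filter]
  rw [h1, h2, h3, h4, Aco]
  ring

lemma Aco_congr (s : ℕ) {x x' : Fin n → ℝ} (h : ∀ w, w ≠ u → w ≠ v → x' w = x w) :
    Aco G u v s x' = Aco G u v s x := by
  apply Finset.sum_congr rfl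
  intro S hS
  rw [Finset.mem_filter] at hS
  apply Finset.prod_congr rfl
  intro w hw
  exact h w (fun he => hS.2.1 (he ▸ hw)) (fun he => hS.2.2 (he ▸ hw))

lemma Bco_congr (huv : u ≠ v) (hnadj : ¬ G.Adj u v) (s : ℕ) {x x' : Fin n → ℝ} (h : ∀ w, w ≠ u → w ≠ v → x' w = x w) :
    Bco G u s x' = Bco G u s x := by
  apply Finset.sum_congr rfl
  intro S hS
  rw [Finset.mem_filter] at hS
  apply Finset.prod_congr rfl
  intro w hw
  rw [Finset.mem_erase] at hw
  refine h w hw.1 (fun he => ?_)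
  exact not_both G huv hnadj hS.1 hS.2 (he ▸ hw.2)

lemma Cco_congr (huv : u ≠ v) (hnadj : ¬ G.Adj u v) (s : ℕ) {x x' : Fin n → ℝ} (h : ∀ w, w ≠ u → w ≠ v → x' w = x w) :
    Cco G v s x' = Cco G v s x := by
  apply Finset.sum_congr rfl
  intro S hS
  rw [Finset.mem_filter] at hS
  apply Finset.prod_congr rfl
  intro w hw
  rw [Finset.mem_erase] at hw
  refine h w (fun he => ?_) hw.1
  exact not_both G huv hnadj hS.1 (he ▸ hw.2) hS.2

lemma Bco_nonneg (s : ℕ) {x : Fin n → ℝ} (hx : ∀ w, 0 ≤ x w) : 0 ≤ Bco G u s x :=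
  Finset.sum_nonneg fun S _ => Finset.prod_nonneg fun w _ => hx w

lemma Cco_nonneg (s : ℕ) {x : Fin n → ℝ} (hx : ∀ w, 0 ≤ x w) : 0 ≤ Cco G v s x :=
  Finset.sum_nonneg fun S _ => Finset.prod_nonneg fun w _ => hx w

lemma clique_support_case {r : ℕ} (hG : G.CliqueFree (r+1)) (x : Fin n → ℝ)
    (hx : ∀ w, 0 ≤ x w)
    (hcl : ∀ a ∈ Finset.univ.filter (fun w => x w ≠ 0),
      ∀ b ∈ Finset.univ.filter (fun w => x w ≠ 0), a ≠ b → G.Adj a b)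
    (i j : ℕ) (hi : 1 ≤ i) (hij : i ≤ j) (hj : j ≤ r) :
    Pw G j x ^ i * ((r.choose i : ℕ) : ℝ) ^ j ≤ Pw G i x ^ j * ((r.choose j : ℕ) : ℝ) ^ i := by
  set A : Finset (Fin n) := Finset.univ.filter (fun w => x w ≠ 0) with hA
  have hAcard : A.card ≤ r := by
    by_contra hc
    push_neg at hc
    obtain ⟨B, hBA, hBcard⟩ := Finset.exists_subset_card_eq (show r+1 ≤ A.card by omega)
    refine hG B ⟨?_, hBcard⟩
    intro a ha b hb hab
    exact hcl a (hBA ha) b (hBA hb) hab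
  have hP : ∀ s : ℕ, Pw G s x = ∑ S ∈ A.powersetCard s, ∏ w ∈ S, x w := by
    intro s
    have hsub : A.powersetCard s ⊆ CL G s := by
      intro S hS
      rw [Finset.mem_powersetCard] at hS
      rw [CL, Finset.mem_filter]
      refine ⟨Finset.mem_univ _, ?_, hS.2⟩
      intro a ha b hb hab
      exact hcl a (hS.1 ha) b (hS.1 hb) hab
    have hzero : ∀ S ∈ CL G s, S ∉ A.powersetCard s → ∏ w ∈ S, x w = 0 := by
      intro S hS hnot
      rw [Finset.mem_powersetCard] at hnot
      push_neg at hnot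
      have hcardS : S.card = s := ((Finset.mem_filter.mp hS).2).2
      obtain ⟨w, hwS, hwA⟩ := Finset.not_subset.mp (fun hsub' => hnot hsub' hcardS)
      have hw0 : x w = 0 := by
        by_contra hc
        exact hwA (by rw [hA, Finset.mem_filter]; exact ⟨Finset.mem_univ _, hc⟩)
      exact Finset.prod_eq_zero hwS hw0
    exact (Finset.sum_subset hsub hzero).symm
  set M : Multiset ℝ := A.val.map x + Multiset.replicate (r - A.card) 0 with hM
  have hMcard : Multiset.card M = r := by
    rw [hM, Multiset.card_add, Multiset.card_replicate, Multiset.card_map]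
    have : Multiset.card A.val = A.card := rfl
    omega
  have hMnn : ∀ a ∈ M, 0 ≤ a := by
    intro a ha
    rw [hM, Multiset.mem_add] at ha
    rcases ha with ha | ha
    · rw [Multiset.mem_map] at ha
      obtain ⟨w, _, rfl⟩ := ha
      exact hx w
    · rw [Multiset.eq_of_mem_replicate ha]
  have hesymm : ∀ s : ℕ, M.esymm s = Pw G s x := by
    intro s
    rw [hM, esymm_pad_zero, Finset.esymm_map_val, hP]
  have := maclaurin r M hMcard hMnn i j hi hij hj
  rw [hesymm, hesymm] at this
  exact this

lemma slide_finish {r i j : ℕ} {x y : Fin n → ℝ} (hynn : ∀ w, 0 ≤ y w)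
    (hPj : Pw G j y = Pw G j x) (hPi : Pw G i y ≤ Pw G i x)
    (IH : Pw G j y ^ i * ((r.choose i : ℕ):ℝ) ^ j ≤ Pw G i y ^ j * ((r.choose j : ℕ):ℝ) ^ i) :
    Pw G j x ^ i * ((r.choose i : ℕ):ℝ) ^ j ≤ Pw G i x ^ j * ((r.choose j : ℕ):ℝ) ^ i := by
  rw [← hPj]
  refine le_trans IH ?_
  exact mul_le_mul_of_nonneg_right (pow_le_pow_left₀ (Pw_nonneg G i hynn) hPi j)
    (by positivity)

lemma main_aux {r : ℕ} (hG : G.CliqueFree (r+1)) (i j : ℕ) (hi : 1 ≤ i) (hij : i ≤ j)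
    (hj : j ≤ r) :
    ∀ N : ℕ, ∀ x : Fin n → ℝ, (∀ w, 0 ≤ x w) →
      (Finset.univ.filter (fun w => x w ≠ 0)).card ≤ N →
      Pw G j x ^ i * ((r.choose i : ℕ) : ℝ) ^ j ≤ Pw G i x ^ j * ((r.choose j : ℕ) : ℝ) ^ i := by
  intro N
  induction N with
  | zero =>
    intro x hx hcard
    apply clique_support_case G hG x hx ?_ i j hi hij hj
    intro a ha b hb hab
    exfalso
    have hemp : (Finset.univ.filter (fun w => x w ≠ 0)) = ∅ :=
      Finset.card_eq_zero.mp (le_antisymm hcard (Nat.zero_le _))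
    rw [hemp] at ha
    exact absurd ha (Finset.notMem_empty a)
  | succ N IHN =>
    intro x hx hcard
    by_cases hcl : ∀ a ∈ Finset.univ.filter (fun w => x w ≠ 0),
        ∀ b ∈ Finset.univ.filter (fun w => x w ≠ 0), a ≠ b → G.Adj a b
    · exact clique_support_case G hG x hx hcl i j hi hij hj
    push_neg at hcl
    obtain ⟨u, hu, v, hv, huv, hnadj⟩ := hcl
    -- support reduction helper
    have hcard' : ∀ (w₀ : Fin n), w₀ ∈ Finset.univ.filter (fun w => x w ≠ 0) →
        ∀ y : Fin n → ℝ, (∀ w, w ≠ w₀ → y w ≠ 0 → x w ≠ 0) → y w₀ = 0 →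
        (Finset.univ.filter (fun w => y w ≠ 0)).card ≤ N := by
      intro w₀ hw₀ y hy hy0
      have hsub : Finset.univ.filter (fun w => y w ≠ 0)
          ⊆ (Finset.univ.filter (fun w => x w ≠ 0)).erase w₀ := by
        intro w hw
        rw [Finset.mem_filter] at hw
        have hne : w ≠ w₀ := by
          intro he
          exact hw.2 (he ▸ hy0)
        rw [Finset.mem_erase, Finset.mem_filter]
        exact ⟨hne, Finset.mem_univ _, hy w hne hw.2⟩
      have h1 := Finset.card_le_card hsub
      rw [Finset.card_erase_of_mem hw₀] at h1
      have h2 : 1 ≤ (Finset.univ.filter (fun w => x w ≠ 0)).card :=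
        Finset.card_pos.mpr ⟨w₀, hw₀⟩
      omega
    have dxj := decomp G huv hnadj j x
    have dxi := decomp G huv hnadj i x
    have hBjnn := Bco_nonneg G (u := u) j hx
    have hCjnn := Cco_nonneg G (v := v) j hx
    have hBinn := Bco_nonneg G (u := u) i hx
    have hCinn := Cco_nonneg G (v := v) i hx
    by_cases hBj : Bco G u j x = 0
    · -- kill u, P_j unchanged
      set y : Fin n → ℝ := Function.update x u 0 with hy
      have hyoff : ∀ w, w ≠ u → w ≠ v → y w = x w := by
        intro w hwu _
        rw [hy, Function.update_of_ne hwu]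
      have hyu : y u = 0 := Function.update_self u 0 x
      have hyv : y v = x v := Function.update_of_ne (Ne.symm huv) 0 x
      have hynn : ∀ w, 0 ≤ y w := by
        intro w
        by_cases hwu : w = u
        · rw [hwu, hyu]
        · rw [hy, Function.update_of_ne hwu]
          exact hx w
      have dyj := decomp G huv hnadj j y
      rw [Aco_congr G j hyoff, Bco_congr G huv hnadj j hyoff,
        Cco_congr G huv hnadj j hyoff, hyu, hyv] at dyj
      have dyi := decomp G huv hnadj i y
      rw [Aco_congr G i hyoff, Bco_congr G huv hnadj i hyoff,
        Cco_congr G huv hnadj i hyoff, hyu, hyv] at dyi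
      have hPj : Pw G j y = Pw G j x := by rw [dyj, dxj, hBj]; ring
      have hPi : Pw G i y ≤ Pw G i x := by
        rw [dyi, dxi]
        have : 0 ≤ x u * Bco G u i x := mul_nonneg (hx u) hBinn
        linarith
      refine slide_finish G hynn hPj hPi (IHN y hynn ?_)
      refine hcard' u hu y ?_ hyu
      intro w hwu hyw
      rw [hy, Function.update_of_ne hwu] at hyw
      exact hyw
    by_cases hCj : Cco G v j x = 0
    · -- kill v, P_j unchanged
      set y : Fin n → ℝ := Function.update x v 0 with hy
      have hyoff : ∀ w, w ≠ u → w ≠ v → y w = x w := by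
        intro w _ hwv
        rw [hy, Function.update_of_ne hwv]
      have hyv : y v = 0 := Function.update_self v 0 x
      have hyu : y u = x u := Function.update_of_ne huv 0 x
      have hynn : ∀ w, 0 ≤ y w := by
        intro w
        by_cases hwv : w = v
        · rw [hwv, hyv]
        · rw [hy, Function.update_of_ne hwv]
          exact hx w
      have dyj := decomp G huv hnadj j y
      rw [Aco_congr G j hyoff, Bco_congr G huv hnadj j hyoff,
        Cco_congr G huv hnadj j hyoff, hyu, hyv] at dyj
      have dyi := decomp G huv hnadj i y
      rw [Aco_congr G i hyoff, Bco_congr G huv hnadj i hyoff,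
        Cco_congr G huv hnadj i hyoff, hyu, hyv] at dyi
      have hPj : Pw G j y = Pw G j x := by rw [dyj, dxj, hCj]; ring
      have hPi : Pw G i y ≤ Pw G i x := by
        rw [dyi, dxi]
        have : 0 ≤ x v * Cco G v i x := mul_nonneg (hx v) hCinn
        linarith
      refine slide_finish G hynn hPj hPi (IHN y hynn ?_)
      refine hcard' v hv y ?_ hyv
      intro w hwv hyw
      rw [hy, Function.update_of_ne hwv] at hyw
      exact hyw
    -- both positive
    have hBjpos : 0 < Bco G u j x := lt_of_le_of_ne hBjnn (Ne.symm hBj)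
    have hCjpos : 0 < Cco G v j x := lt_of_le_of_ne hCjnn (Ne.symm hCj)
    by_cases hcmp : Bco G u i x * Cco G v j x ≤ Cco G v i x * Bco G u j x
    · -- kill v, transfer weight to u
      set α : ℝ := x u + Cco G v j x * x v / Bco G u j x with hα
      set y : Fin n → ℝ := Function.update (Function.update x u α) v 0 with hy
      have hyoff : ∀ w, w ≠ u → w ≠ v → y w = x w := by
        intro w hwu hwv
        rw [hy, Function.update_of_ne hwv, Function.update_of_ne hwu]
      have hyv : y v = 0 := Function.update_self v 0 _
      have hyu : y u = α := by
        rw [hy, Function.update_of_ne huv, Function.update_self]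
      have hynn : ∀ w, 0 ≤ y w := by
        intro w
        by_cases hwv : w = v
        · rw [hwv, hyv]
        by_cases hwu : w = u
        · rw [hwu, hyu, hα]
          have : 0 ≤ Cco G v j x * x v / Bco G u j x :=
            div_nonneg (mul_nonneg hCjnn (hx v)) hBjpos.le
          linarith [hx u]
        · rw [hyoff w hwu hwv]
          exact hx w
      have dyj := decomp G huv hnadj j y
      rw [Aco_congr G j hyoff, Bco_congr G huv hnadj j hyoff,
        Cco_congr G huv hnadj j hyoff, hyu, hyv] at dyj
      have dyi := decomp G huv hnadj i y
      rw [Aco_congr G i hyoff, Bco_congr G huv hnadj i hyoff,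
        Cco_congr G huv hnadj i hyoff, hyu, hyv] at dyi
      have hPj : Pw G j y = Pw G j x := by
        rw [dyj, dxj, hα]
        rw [add_mul, div_mul_cancel₀ _ (ne_of_gt hBjpos)]
        ring
      have hPi : Pw G i y ≤ Pw G i x := by
        rw [dyi, dxi, hα]
        have hkey : Cco G v j x * x v / Bco G u j x * Bco G u i x
            ≤ x v * Cco G v i x := by
          rw [div_mul_eq_mul_div, div_le_iff₀ hBjpos]
          nlinarith [hx v, hcmp]
        have expand : (x u + Cco G v j x * x v / Bco G u j x) * Bco G u i x
            = x u * Bco G u i x + Cco G v j x * x v / Bco G u j x * Bco G u i x := by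
          ring
        rw [expand]
        linarith
      refine slide_finish G hynn hPj hPi (IHN y hynn ?_)
      refine hcard' v hv y ?_ hyv
      intro w hwv hyw
      by_cases hwu : w = u
      · subst hwu
        exact (Finset.mem_filter.mp hu).2
      · rw [hyoff w hwu hwv] at hyw
        exact hyw
    · -- kill u, transfer weight to v
      push_neg at hcmp
      set α : ℝ := x v + Bco G u j x * x u / Cco G v j x with hα
      set y : Fin n → ℝ := Function.update (Function.update x v α) u 0 with hy
      have hyoff : ∀ w, w ≠ u → w ≠ v → y w = x w := by
        intro w hwu hwv
        rw [hy, Function.update_of_ne hwu, Function.update_of_ne hwv]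
      have hyu : y u = 0 := Function.update_self u 0 _
      have hyv : y v = α := by
        rw [hy, Function.update_of_ne (Ne.symm huv), Function.update_self]
      have hynn : ∀ w, 0 ≤ y w := by
        intro w
        by_cases hwu : w = u
        · rw [hwu, hyu]
        by_cases hwv : w = v
        · rw [hwv, hyv, hα]
          have : 0 ≤ Bco G u j x * x u / Cco G v j x :=
            div_nonneg (mul_nonneg hBjnn (hx u)) hCjpos.le
          linarith [hx v]
        · rw [hyoff w hwu hwv]
          exact hx w
      have dyj := decomp G huv hnadj j y
      rw [Aco_congr G j hyoff, Bco_congr G huv hnadj j hyoff,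
        Cco_congr G huv hnadj j hyoff, hyu, hyv] at dyj
      have dyi := decomp G huv hnadj i y
      rw [Aco_congr G i hyoff, Bco_congr G huv hnadj i hyoff,
        Cco_congr G huv hnadj i hyoff, hyu, hyv] at dyi
      have hPj : Pw G j y = Pw G j x := by
        rw [dyj, dxj, hα]
        rw [add_mul, div_mul_cancel₀ _ (ne_of_gt hCjpos)]
        ring
      have hPi : Pw G i y ≤ Pw G i x := by
        rw [dyi, dxi, hα]
        have hkey : Bco G u j x * x u / Cco G v j x * Cco G v i x
            ≤ x u * Bco G u i x := by
          rw [div_mul_eq_mul_div, div_le_iff₀ hCjpos]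
          nlinarith [hx u, hcmp.le]
        have expand : (x v + Bco G u j x * x u / Cco G v j x) * Cco G v i x
            = x v * Cco G v i x + Bco G u j x * x u / Cco G v j x * Cco G v i x := by
          ring
        rw [expand]
        linarith
      refine slide_finish G hynn hPj hPi (IHN y hynn ?_)
      refine hcard' u hu y ?_ hyu
      intro w hwu hyw
      by_cases hwv : w = v
      · subst hwv
        exact (Finset.mem_filter.mp hv).2
      · rw [hyoff w hwu hwv] at hyw
        exact hyw

end Graph

end FR

open FR in
/-- Khadzhiivanov / Sós–Straus inequality between clique counts of a `K_{r+1}`-free graph. -/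
theorem stmt_5 (r n i j : ℕ) (hr : 2 ≤ r) (hi : 1 ≤ i) (hij : i ≤ j) (hj : j ≤ r)
    (G : SimpleGraph (Fin n)) (hG : G.CliqueFree (r + 1)) :
    ((cliqueCount G j : ℝ) / (r.choose j : ℝ)) ^ ((1 : ℝ) / j) ≤
      ((cliqueCount G i : ℝ) / (r.choose i : ℝ)) ^ ((1 : ℝ) / i) := by
  classical
  have hkey := FR.main_aux G hG i j hi hij hj
    ((Finset.univ.filter (fun w : Fin n => (fun _ : Fin n => (1:ℝ)) w ≠ 0)).card)
    (fun _ => (1:ℝ)) (fun _ => zero_le_one) le_rfl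
  have hPw1 : ∀ s : ℕ, FR.Pw G s (fun _ => (1:ℝ)) = ((FR.CL G s).card : ℝ) := by
    intro s
    rw [FR.Pw]
    simp
  rw [hPw1, hPw1] at hkey
  have hcc : ∀ s : ℕ, (cliqueCount G s : ℕ) = (FR.CL G s).card := by
    intro s
    unfold cliqueCount
    rw [show {S : Finset (Fin n) | G.IsNClique s S} = ↑(FR.CL G s) by
      ext S; simp [FR.CL]]
    exact Set.ncard_coe_finset _
  rw [← hcc i, ← hcc j] at hkey
  -- number facts
  have hi0 : (0:ℝ) < (i : ℝ) := by exact_mod_cast (by omega : 0 < i)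
  have hj0 : (0:ℝ) < (j : ℝ) := by exact_mod_cast (by omega : 0 < j)
  have hCi : (0:ℝ) < ((r.choose i : ℕ) : ℝ) := by
    exact_mod_cast Nat.choose_pos (le_trans hij hj)
  have hCj : (0:ℝ) < ((r.choose j : ℕ) : ℝ) := by
    exact_mod_cast Nat.choose_pos hj
  set X : ℝ := (cliqueCount G j : ℝ) / (r.choose j : ℝ) with hX
  set Y : ℝ := (cliqueCount G i : ℝ) / (r.choose i : ℝ) with hY
  have hXnn : 0 ≤ X := by
    rw [hX]
    positivity
  have hYnn : 0 ≤ Y := by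
    rw [hY]
    positivity
  have hdiv : X ^ (i : ℕ) ≤ Y ^ (j : ℕ) := by
    rw [hX, hY, div_pow, div_pow, div_le_div_iff₀ (by positivity) (by positivity)]
    exact hkey
  have e1 : X ^ ((1:ℝ)/(j:ℝ)) = (X ^ (i : ℕ)) ^ ((1:ℝ)/((i:ℝ)*(j:ℝ))) := by
    rw [← Real.rpow_natCast X i, ← Real.rpow_mul hXnn]
    congr 1
    field_simp
  have e2 : Y ^ ((1:ℝ)/(i:ℝ)) = (Y ^ (j : ℕ)) ^ ((1:ℝ)/((i:ℝ)*(j:ℝ))) := by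
    rw [← Real.rpow_natCast Y j, ← Real.rpow_mul hYnn]
    congr 1
    field_simp
  rw [e1, e2]
  exact Real.rpow_le_rpow (by positivity) hdiv (by positivity)
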